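/- arXiv:1301.2514 — 4 statements merged into one kernel-verified Lean document; each statement's English description precedes it below -/
import Mathlib

section
/- Let Φ : (0,1] → ℝ be differentiable with Φ'(r) ≤ 0 for all r ∈ (0,1] and Φ(1) = 0. Let V ∈ ℝ, L > 0 and r* ∈ (0,1) satisfy V²/2 = L²/(2 r*²) + 2 Φ(r*). Then V²/2 − L²/(2r²) − 2Φ(r) > 0 for every r ∈ (r*,1], and the scattering time satisfies τ* := √2 ∫_{r*}^{1} (V²/2 − L²/(2r²) − 2Φ(r))^{−1/2} dr ≤ 2√2 / L. -/
open Set MeasureTheory intervalIntegral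

/-- **Scattering time bound** (Lemma 2.1).
For a radial, nonincreasing potential `Φ` of range `1` (in microscopic variables, with
`Φ 1 = 0`), relative speed `V`, angular momentum `L > 0` and minimal distance
`r* ∈ (0,1)` determined by `V²/2 = L²/(2 r*²) + 2 Φ(r*)`, the effective kinetic energy
`V²/2 − L²/(2r²) − 2Φ(r)` is positive on `(r*,1]` and the scattering time
`τ* = √2 ∫_{r*}^1 (V²/2 − L²/(2r²) − 2Φ(r))^{-1/2} dr` is at most `2√2/L`. -/
theorem scattering_time_bound
    (Φ : ℝ → ℝ)
    (hΦdiff : ∀ r ∈ Set.Ioc (0:ℝ) 1, DifferentiableAt ℝ Φ r)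
    (hΦderiv : ∀ r ∈ Set.Ioc (0:ℝ) 1, deriv Φ r ≤ 0)
    (hΦ1 : Φ 1 = 0)
    (V L rs : ℝ) (hL : 0 < L) (hrs : rs ∈ Set.Ioo (0:ℝ) 1)
    (hturn : V ^ 2 / 2 = L ^ 2 / (2 * rs ^ 2) + 2 * Φ rs) :
    (∀ r ∈ Set.Ioc rs 1, 0 < V ^ 2 / 2 - L ^ 2 / (2 * r ^ 2) - 2 * Φ r) ∧
    Real.sqrt 2 * ∫ r in rs..1, 1 / Real.sqrt (V ^ 2 / 2 - L ^ 2 / (2 * r ^ 2) - 2 * Φ r)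
      ≤ 2 * Real.sqrt 2 / L := by
  obtain ⟨hrs0, hrs1⟩ := hrs
  have hsqrt2 : Real.sqrt 2 ^ 2 = 2 := Real.sq_sqrt (by norm_num)
  have hsqrt2pos : 0 < Real.sqrt 2 := Real.sqrt_pos.2 (by norm_num)
  have hone_le : (1:ℝ) ≤ Real.sqrt 2 := by nlinarith
  -- Φ is antitone on [rs, 1]
  have hsub : Icc rs 1 ⊆ Ioc (0:ℝ) 1 := fun x hx => ⟨lt_of_lt_of_le hrs0 hx.1, hx.2⟩
  have hanti : AntitoneOn Φ (Icc rs 1) := by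
    apply antitoneOn_of_deriv_nonpos (convex_Icc rs 1)
    · exact fun x hx => (hΦdiff x (hsub hx)).continuousAt.continuousWithinAt
    · intro x hx
      rw [interior_Icc] at hx
      exact (hΦdiff x (hsub ⟨hx.1.le, hx.2.le⟩)).differentiableWithinAt
    · intro x hx
      rw [interior_Icc] at hx
      exact hΦderiv x (hsub ⟨hx.1.le, hx.2.le⟩)
  -- energy lower bound
  have key : ∀ r ∈ Set.Ioc rs 1,
      L ^ 2 / (2 * rs ^ 2) - L ^ 2 / (2 * r ^ 2)
        ≤ V ^ 2 / 2 - L ^ 2 / (2 * r ^ 2) - 2 * Φ r := by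
    intro r hr
    have hΦle : Φ r ≤ Φ rs := hanti ⟨le_refl rs, hrs1.le⟩ ⟨hr.1.le, hr.2⟩ hr.1.le
    rw [hturn]; nlinarith
  have hBpos : ∀ r ∈ Set.Ioc rs 1,
      0 < L ^ 2 / (2 * rs ^ 2) - L ^ 2 / (2 * r ^ 2) := by
    intro r hr
    have h1 : 0 < rs ^ 2 := by positivity
    have h2 : rs ^ 2 < r ^ 2 := by nlinarith [hr.1]
    rw [sub_pos]
    apply div_lt_div_of_pos_left (by positivity) (by positivity)
    nlinarith
  have hEpos : ∀ r ∈ Set.Ioc rs 1, 0 < V ^ 2 / 2 - L ^ 2 / (2 * r ^ 2) - 2 * Φ r :=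
    fun r hr => lt_of_lt_of_le (hBpos r hr) (key r hr)
  refine ⟨hEpos, ?_⟩
  set c : ℝ := Real.sqrt 2 * rs / L with hc
  have hcpos : 0 < c := by positivity
  set f : ℝ → ℝ := fun r => 1 / Real.sqrt (V ^ 2 / 2 - L ^ 2 / (2 * r ^ 2) - 2 * Φ r) with hf
  set g : ℝ → ℝ := fun r => c * (r / Real.sqrt (r ^ 2 - rs ^ 2)) with hg
  set G : ℝ → ℝ := fun r => c * Real.sqrt (r ^ 2 - rs ^ 2) with hG
  -- G is continuous on [rs,1] with derivative g on (rs,1)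
  have hGcont : ContinuousOn G (Icc rs 1) := by
    apply Continuous.continuousOn
    exact continuous_const.mul ((continuous_pow 2).sub continuous_const).sqrt
  have hGderiv : ∀ x ∈ Ioo rs 1, HasDerivAt G (g x) x := by
    intro x hx
    have hxpos : 0 < x := lt_trans hrs0 hx.1
    have hx2 : 0 < x ^ 2 - rs ^ 2 := by nlinarith [hx.1]
    have h1 : HasDerivAt (fun r : ℝ => r ^ 2 - rs ^ 2) (2 * x) x := by
      simpa using ((hasDerivAt_pow 2 x).sub_const (rs ^ 2))
    have h2 : HasDerivAt (fun r => Real.sqrt (r ^ 2 - rs ^ 2))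
        (2 * x / (2 * Real.sqrt (x ^ 2 - rs ^ 2))) x := h1.sqrt hx2.ne'
    have h3 := h2.const_mul c
    refine h3.congr_deriv ?_
    have hs : Real.sqrt (x ^ 2 - rs ^ 2) ≠ 0 := by positivity
    simp only [hg]
    field_simp
  have hgpos : ∀ x ∈ Ioo rs 1, 0 ≤ g x := by
    intro x hx
    have hxpos : 0 < x := lt_trans hrs0 hx.1
    have : 0 ≤ Real.sqrt (x ^ 2 - rs ^ 2) := Real.sqrt_nonneg _
    positivity
  -- g is integrable on Ioc rs 1 with known integral
  have hgint : IntegrableOn g (Ioc rs 1) :=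
    integrableOn_deriv_of_nonneg hGcont hGderiv hgpos
  have hgival : ∫ x in rs..1, g x = G 1 - G rs :=
    integral_eq_sub_of_hasDerivAt_of_le hrs1.le hGcont hGderiv
      ((intervalIntegrable_iff_integrableOn_Ioc_of_le hrs1.le).2 hgint)
  -- pointwise bound f ≤ g on Ioc rs 1
  have hfg : ∀ r ∈ Set.Ioc rs 1, f r ≤ g r := by
    intro r hr
    have hrpos : 0 < r := lt_trans hrs0 hr.1
    have hr2 : 0 < r ^ 2 - rs ^ 2 := by nlinarith [hr.1]
    have hE := hEpos r hr
    have hB' := hBpos r hr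
    have hkey := key r hr
    have hBeq : L ^ 2 / (2 * rs ^ 2) - L ^ 2 / (2 * r ^ 2)
        = (r ^ 2 - rs ^ 2) * (L / (Real.sqrt 2 * rs * r)) ^ 2 := by
      rw [div_pow, mul_pow, mul_pow, hsqrt2]
      field_simp
    have hsB : Real.sqrt (L ^ 2 / (2 * rs ^ 2) - L ^ 2 / (2 * r ^ 2))
        = Real.sqrt (r ^ 2 - rs ^ 2) * (L / (Real.sqrt 2 * rs * r)) := by
      rw [hBeq, Real.sqrt_mul hr2.le, Real.sqrt_sq (by positivity)]
    have h1 : f r ≤ 1 / Real.sqrt (L ^ 2 / (2 * rs ^ 2) - L ^ 2 / (2 * r ^ 2)) := by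
      apply one_div_le_one_div_of_le (Real.sqrt_pos.2 hB')
      exact Real.sqrt_le_sqrt hkey
    refine h1.trans_eq ?_
    rw [hsB, hg, hc]
    have hs : Real.sqrt (r ^ 2 - rs ^ 2) ≠ 0 := by positivity
    field_simp
  -- f is integrable on Ioc rs 1
  have hfnonneg : ∀ r, 0 ≤ f r := fun r => by
    rw [hf]; positivity
  have hfcont : ContinuousOn f (Ioc rs 1) := by
    have hEcont : ContinuousOn (fun r => V ^ 2 / 2 - L ^ 2 / (2 * r ^ 2) - 2 * Φ r)
        (Ioc rs 1) := by
      apply ContinuousOn.sub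
      apply ContinuousOn.sub continuousOn_const
      · apply ContinuousOn.div continuousOn_const
        · exact (continuous_const.mul (continuous_pow 2)).continuousOn
        · intro x hx
          have : 0 < x := lt_trans hrs0 hx.1
          positivity
      · exact continuousOn_const.mul fun x hx =>
          (hΦdiff x ⟨lt_trans hrs0 hx.1, hx.2⟩).continuousAt.continuousWithinAt
    apply ContinuousOn.div continuousOn_const (hEcont.sqrt)
    intro x hx
    exact (Real.sqrt_pos.2 (hEpos x hx)).ne'
  have hfint : IntegrableOn f (Ioc rs 1) := by
    apply Integrable.mono' hgint (hfcont.aestronglyMeasurable measurableSet_Ioc)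
    filter_upwards [ae_restrict_mem measurableSet_Ioc] with r hr
    rw [Real.norm_of_nonneg (hfnonneg r)]
    exact hfg r hr
  -- compare integrals
  have hmono : ∫ r in rs..1, f r ≤ ∫ r in rs..1, g r := by
    rw [intervalIntegral.integral_of_le hrs1.le, intervalIntegral.integral_of_le hrs1.le]
    exact setIntegral_mono_on hfint hgint measurableSet_Ioc hfg
  have hGval : G 1 - G rs ≤ c := by
    have h0 : G rs = 0 := by simp [hG]
    have h1 : Real.sqrt ((1:ℝ) ^ 2 - rs ^ 2) ≤ 1 := Real.sqrt_le_one.2 (by nlinarith)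
    rw [h0, sub_zero, hG]
    calc c * Real.sqrt ((1:ℝ) ^ 2 - rs ^ 2) ≤ c * 1 := by
          exact mul_le_mul_of_nonneg_left h1 hcpos.le
      _ = c := mul_one c
  have hint_le : ∫ r in rs..1, f r ≤ c := hmono.trans (hgival.trans_le hGval)
  calc Real.sqrt 2 * ∫ r in rs..1, f r ≤ Real.sqrt 2 * c :=
        mul_le_mul_of_nonneg_left hint_le hsqrt2pos.le
    _ = 2 * rs / L := by rw [hc]; field_simp; nlinarith
    _ ≤ 2 * Real.sqrt 2 / L := by
        gcongr
        nlinarith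
end

section
/- For every ε > 0, every integer m ≥ 1 and every x₀ ∈ ℝ³, the Lebesgue measure of the set of (x₁,…,x_m) ∈ (ℝ³)^m such that the graph on the m+1 points x₀, x₁, …, x_m, with an edge between x_i and x_k whenever |x_i − x_k| ≤ ε, is connected, is at most (m+1)^{m−1} ((4π/3) ε³)^m. -/
open MeasureTheory Set Metric
open scoped ENNReal

noncomputable section

abbrev R3 : Type := EuclideanSpace ℝ (Fin 3)

/-- The `ε`-cluster graph on a family of points: edges join distinct points at
distance `≤ ε`. -/
def clusterGraph (ε : ℝ) {n : ℕ} (p : Fin n → R3) : SimpleGraph (Fin n) :=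
  SimpleGraph.fromRel (fun i k => dist (p i) (p k) ≤ ε)

open Polynomial Finset

namespace ClusterVol

variable {n : ℕ} [NeZero n]

/-- Leaves of the partial tree: non-root vertices of `S` that are not the parent of any
non-root vertex of `S`. -/
def leaves (q : Fin n → Fin n) (S : Finset (Fin n)) : Finset (Fin n) :=
  (S.erase 0).filter fun v => ∀ w ∈ S.erase 0, q w ≠ v

lemma leaves_subset_erase (q : Fin n → Fin n) (S : Finset (Fin n)) :
    leaves q S ⊆ S.erase 0 := Finset.filter_subset _ _

/-- Prüfer-type code: repeatedly record the parent of the largest leaf and remove it. -/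
def code (q : Fin n → Fin n) (S : Finset (Fin n)) : List (Fin n) :=
  if h : (leaves q S).Nonempty then
    q ((leaves q S).max' h) :: code q (S.erase ((leaves q S).max' h))
  else []
termination_by S.card
decreasing_by
  exact Finset.card_erase_lt_of_mem
    (Finset.mem_of_mem_erase (leaves_subset_erase _ _ ((leaves q S).max'_mem h)))

/-- `q` is a parent map on `S` with rank function `r` decreasing toward the root. -/
def Par (q : Fin n → Fin n) (r : Fin n → ℕ) (S : Finset (Fin n)) : Prop :=
  ∀ v ∈ S.erase 0, q v ∈ S ∧ r (q v) < r v

variable {q q' : Fin n → Fin n} {r r' : Fin n → ℕ} {S : Finset (Fin n)}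

lemma leaves_nonempty (hq : Par q r S) (hS : (S.erase 0).Nonempty) :
    (leaves q S).Nonempty := by
  obtain ⟨v, hv, hmax⟩ := Finset.exists_max_image (S.erase 0) r hS
  refine ⟨v, Finset.mem_filter.2 ⟨hv, fun w hw hqe => ?_⟩⟩
  have h1 := (hq w hw).2
  rw [hqe] at h1
  exact absurd (hmax w hw) (by omega)

lemma erase_empty_of_not_leaves (hq : Par q r S) (h : ¬ (leaves q S).Nonempty) :
    S.erase 0 = ∅ := by
  by_contra hne
  exact h (leaves_nonempty hq (Finset.nonempty_iff_ne_empty.2 hne))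

lemma par_erase (hq : Par q r S) {v : Fin n} (hv : v ∈ leaves q S) :
    Par q r (S.erase v) := by
  intro w hw
  have hw0 : w ∈ S.erase 0 := by
    rw [Finset.erase_right_comm] at hw
    exact Finset.mem_of_mem_erase hw
  obtain ⟨h1, h2⟩ := hq w hw0
  refine ⟨Finset.mem_erase.2 ⟨?_, h1⟩, h2⟩
  exact (Finset.mem_filter.1 hv).2 w hw0

lemma code_length : ∀ S : Finset (Fin n), Par q r S → (code q S).length = (S.erase 0).card := by
  intro S
  induction S using Finset.strongInduction with
  | _ S ih =>
    intro hq
    rw [code]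
    split_ifs with h
    · set v := (leaves q S).max' h with hv
      have hvl : v ∈ leaves q S := (leaves q S).max'_mem h
      have hve : v ∈ S.erase 0 := leaves_subset_erase _ _ hvl
      have hvS : v ∈ S := Finset.mem_of_mem_erase hve
      have hS : S.erase v ⊂ S := Finset.erase_ssubset hvS
      rw [List.length_cons, ih _ hS (par_erase hq hvl), Finset.erase_right_comm,
        Finset.card_erase_of_mem hve]
      have : 0 < (S.erase 0).card := Finset.card_pos.2 ⟨v, hve⟩
      omega
    · rw [erase_empty_of_not_leaves hq h]
      simp

end ClusterVol

namespace ClusterVol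

variable {n : ℕ} [NeZero n]
variable {q q' : Fin n → Fin n} {r r' : Fin n → ℕ}

lemma mem_code {x : Fin n} :
    ∀ S : Finset (Fin n), Par q r S → (x ∈ code q S ↔ ∃ w ∈ S.erase 0, q w = x) := by
  intro S
  induction S using Finset.strongInduction with
  | _ S ih =>
    intro hq
    rw [code]
    split_ifs with h
    · set v := (leaves q S).max' h with hv
      have hvl : v ∈ leaves q S := (leaves q S).max'_mem h
      have hve : v ∈ S.erase 0 := leaves_subset_erase _ _ hvl
      have hvS : v ∈ S := Finset.mem_of_mem_erase hve
      rw [List.mem_cons, ih _ (Finset.erase_ssubset hvS) (par_erase hq hvl)]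
      constructor
      · rintro (rfl | ⟨w, hw, hwx⟩)
        · exact ⟨v, hve, rfl⟩
        · refine ⟨w, ?_, hwx⟩
          rw [Finset.erase_right_comm] at hw
          exact Finset.mem_of_mem_erase hw
      · rintro ⟨w, hw, hwx⟩
        by_cases hwv : w = v
        · subst hwv; exact Or.inl hwx.symm
        · refine Or.inr ⟨w, ?_, hwx⟩
          rw [Finset.erase_right_comm]
          exact Finset.mem_erase.2 ⟨hwv, hw⟩
    · simp [erase_empty_of_not_leaves hq h]

lemma leaves_eq_filter (S : Finset (Fin n)) (hq : Par q r S) :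
    leaves q S = (S.erase 0).filter (fun v => v ∉ code q S) := by
  ext v
  simp only [leaves, Finset.mem_filter, mem_code S hq]
  push_neg
  tauto

lemma code_inj :
    ∀ S : Finset (Fin n), Par q r S → Par q' r' S → code q S = code q' S →
      ∀ v ∈ S.erase 0, q v = q' v := by
  intro S
  induction S using Finset.strongInduction with
  | _ S ih =>
    intro hq hq' hcode
    have hl : leaves q S = leaves q' S := by
      rw [leaves_eq_filter S hq, leaves_eq_filter S hq', hcode]
    by_cases h : (leaves q S).Nonempty
    · have h' : (leaves q' S).Nonempty := hl ▸ h
      have hmax : (leaves q' S).max' h' = (leaves q S).max' h := by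
        congr 1
        exact hl.symm
      set v := (leaves q S).max' h with hv
      have hvl : v ∈ leaves q S := (leaves q S).max'_mem h
      have hvl' : v ∈ leaves q' S := hl ▸ hvl
      have hve : v ∈ S.erase 0 := leaves_subset_erase _ _ hvl
      have hvS : v ∈ S := Finset.mem_of_mem_erase hve
      rw [code, dif_pos h] at hcode
      conv_rhs at hcode => rw [code, dif_pos h']
      rw [hmax] at hcode
      obtain ⟨hhead, htail⟩ := List.cons.injEq _ _ _ _ ▸ hcode
      have hrec := ih _ (Finset.erase_ssubset hvS) (par_erase hq hvl)
        (par_erase hq' hvl') htail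
      intro w hw
      by_cases hwv : w = v
      · subst hwv; exact hhead
      · refine hrec w ?_
        rw [Finset.erase_right_comm]
        exact Finset.mem_erase.2 ⟨hwv, hw⟩
    · intro w hw
      rw [erase_empty_of_not_leaves hq h] at hw
      simp at hw

lemma code_last :
    ∀ S : Finset (Fin n), Par q r S → 0 ∈ S → (S.erase 0).Nonempty →
      ∃ l, code q S = l ++ [(0 : Fin n)] := by
  intro S
  induction S using Finset.strongInduction with
  | _ S ih =>
    intro hq h0 hne
    have h : (leaves q S).Nonempty := leaves_nonempty hq hne
    rw [code, dif_pos h]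
    set v := (leaves q S).max' h with hv
    have hvl : v ∈ leaves q S := (leaves q S).max'_mem h
    have hve : v ∈ S.erase 0 := leaves_subset_erase _ _ hvl
    have hvS : v ∈ S := Finset.mem_of_mem_erase hve
    have hv0 : v ≠ 0 := (Finset.mem_erase.1 hve).1
    have hpar := par_erase hq hvl
    by_cases h2 : ((S.erase v).erase 0).Nonempty
    · obtain ⟨l, hl⟩ := ih _ (Finset.erase_ssubset hvS) hpar
        (Finset.mem_erase.2 ⟨Ne.symm hv0, h0⟩) h2
      exact ⟨q v :: l, by rw [hl]; rfl⟩
    · have hemp : (S.erase v).erase 0 = ∅ := Finset.not_nonempty_iff_eq_empty.1 h2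
      have hnil : code q (S.erase v) = [] := by
        have := code_length _ hpar
        rw [hemp, Finset.card_empty] at this
        exact List.length_eq_zero_iff.1 this
      have hq0 : q v = 0 := by
        obtain ⟨hqS, hqr⟩ := hq v hve
        by_contra hne0
        have : q v ∈ (S.erase v).erase 0 := by
          refine Finset.mem_erase.2 ⟨hne0, Finset.mem_erase.2 ⟨?_, hqS⟩⟩
          intro hqv; rw [hqv] at hqr; omega
        rw [hemp] at this
        simp at this
      exact ⟨[], by rw [hnil, hq0]; rfl⟩

end ClusterVol

namespace ClusterVol

/-- Acyclicity of a parent map: vertex `i.succ` has parent `p i`, and some rank function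
decreases from child to parent. -/
def Acyc (m : ℕ) (p : Fin m → Fin (m + 1)) : Prop :=
  ∃ r : Fin (m + 1) → ℕ, ∀ i, r (p i) < r i.succ

lemma par_univ {m : ℕ} (p : Fin m → Fin (m + 1)) (r : Fin (m + 1) → ℕ)
    (hr : ∀ i, r (p i) < r i.succ) :
    Par (Fin.cases 0 p) r (Finset.univ : Finset (Fin (m + 1))) := by
  intro v hv
  have hv0 : v ≠ 0 := (Finset.mem_erase.1 hv).1
  obtain ⟨i, rfl⟩ := Fin.exists_succ_eq.2 hv0
  exact ⟨Finset.mem_univ _, by simpa using hr i⟩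

lemma acyc_inj {m : ℕ} (hm : 1 ≤ m) :
    Function.Injective (fun P : {p : Fin m → Fin (m + 1) // Acyc m p} =>
      (fun j : Fin (m - 1) => (code (Fin.cases 0 P.1) Finset.univ).getD j 0)) := by
  rintro ⟨p, hp⟩ ⟨p', hp'⟩ h
  obtain ⟨rp, hrp⟩ := hp
  obtain ⟨rp', hrp'⟩ := hp'
  have hq : Par (Fin.cases 0 p) rp (Finset.univ : Finset (Fin (m + 1))) := par_univ p rp hrp
  have hq' : Par (Fin.cases 0 p') rp' (Finset.univ : Finset (Fin (m + 1))) :=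
    par_univ p' rp' hrp'
  have hcard : ((Finset.univ : Finset (Fin (m + 1))).erase 0).card = m := by
    rw [Finset.card_erase_of_mem (Finset.mem_univ _), Finset.card_univ, Fintype.card_fin]
    omega
  have hne : ((Finset.univ : Finset (Fin (m + 1))).erase 0).Nonempty := by
    refine ⟨(⟨0, hm⟩ : Fin m).succ, Finset.mem_erase.2 ⟨Fin.succ_ne_zero _, Finset.mem_univ _⟩⟩
  obtain ⟨l, hl⟩ := code_last Finset.univ hq (Finset.mem_univ _) hne
  obtain ⟨l', hl'⟩ := code_last Finset.univ hq' (Finset.mem_univ _) hne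
  have hlen : l.length = m - 1 := by
    have := code_length Finset.univ hq
    rw [hl, hcard, List.length_append, List.length_singleton] at this
    omega
  have hlen' : l'.length = m - 1 := by
    have := code_length Finset.univ hq'
    rw [hl', hcard, List.length_append, List.length_singleton] at this
    omega
  have hll : l = l' := by
    refine List.ext_getElem (by rw [hlen, hlen']) (fun j hj hj' => ?_)
    have hjm : j < m - 1 := by omega
    have hgd := congrFun h (⟨j, hjm⟩ : Fin (m - 1))
    simp only [hl, hl'] at hgd
    rw [List.getD_append _ _ _ _ (by omega), List.getD_append _ _ _ _ (by omega)] at hgd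
    rwa [List.getD_eq_getElem _ _ hj, List.getD_eq_getElem _ _ hj'] at hgd
  have hcode : code (Fin.cases 0 p) Finset.univ = code (Fin.cases 0 p') Finset.univ := by
    rw [hl, hl', hll]
  have := code_inj Finset.univ hq hq' hcode
  refine Subtype.ext (funext fun i => ?_)
  have hi := this i.succ
    (Finset.mem_erase.2 ⟨Fin.succ_ne_zero _, Finset.mem_univ _⟩)
  simpa using hi

lemma card_acyc_le (m : ℕ) (hm : 1 ≤ m) :
    Nat.card {p : Fin m → Fin (m + 1) // Acyc m p} ≤ (m + 1) ^ (m - 1) := by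
  have h := Nat.card_le_card_of_injective _ (acyc_inj hm)
  simpa [Nat.card_fun] using h

end ClusterVol


namespace ClusterVol

lemma matrix_det_one_sub_of_isNilpotent {k : Type*} [DecidableEq k] [Fintype k]
    {M : Matrix k k ℝ} (h : IsNilpotent M) : (1 - M).det = 1 := by
  have hu := Matrix.isUnit_charpolyRev_of_isNilpotent h
  obtain ⟨r, -, hr⟩ := Polynomial.isUnit_iff.mp hu
  have h0 : r = 1 := by
    have he := Matrix.eval_charpolyRev (M := M)
    rw [← hr] at he
    simpa using he
  have h1 : M.charpolyRev = 1 := by rw [← hr, h0, map_one]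
  have h2 := congrArg (Polynomial.eval 1) h1
  rw [Matrix.charpolyRev] at h2
  have h3 := (RingHom.map_det (Polynomial.evalRingHom (1 : ℝ))
    (1 - (X : ℝ[X]) • M.map Polynomial.C)).symm
  have h2' : ((RingHom.mapMatrix (Polynomial.evalRingHom (1 : ℝ)))
      (1 - (X : ℝ[X]) • M.map Polynomial.C)).det = 1 := by
    rw [h3]
    simpa [Polynomial.coe_evalRingHom] using h2
  have h4 : (RingHom.mapMatrix (Polynomial.evalRingHom (1 : ℝ)))
      (1 - (X : ℝ[X]) • M.map Polynomial.C) = 1 - M := by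
    ext i j
    rcases eq_or_ne i j with rfl | hij
    · simp [Matrix.one_apply, Matrix.sub_apply, Matrix.smul_apply, Matrix.map_apply]
    · simp [Matrix.one_apply, Matrix.sub_apply, Matrix.smul_apply, Matrix.map_apply, hij]
  rw [h4] at h2'
  exact h2'

lemma linearMap_det_one_sub_of_isNilpotent {E : Type*} [AddCommGroup E] [Module ℝ E]
    [Module.Finite ℝ E] [Module.Free ℝ E] {N : E →ₗ[ℝ] E} (hN : IsNilpotent N) :
    LinearMap.det (1 - N) = 1 := by
  let b := Module.Free.chooseBasis ℝ E
  rw [← LinearMap.det_toMatrix b]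
  have h1 : LinearMap.toMatrix b b (1 - N) = 1 - LinearMap.toMatrix b b N := by
    rw [map_sub]
    congr 1
    exact LinearMap.toMatrix_one b
  rw [h1]
  refine matrix_det_one_sub_of_isNilpotent ?_
  obtain ⟨k, hk⟩ := hN
  refine ⟨k, ?_⟩
  rw [LinearMap.toMatrix_pow, hk, map_zero]

end ClusterVol

namespace ClusterVol

variable {m : ℕ}

/-- Extension by `0` at the root, as a linear map. -/
def ext0 (m : ℕ) : (Fin m → R3) →ₗ[ℝ] (Fin (m + 1) → R3) where
  toFun xs := Fin.cons 0 xs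
  map_add' a b := funext fun v => by
    refine Fin.cases ?_ (fun i => ?_) v <;> simp
  map_smul' c a := funext fun v => by
    refine Fin.cases ?_ (fun i => ?_) v <;> simp

/-- The "parent reading" nilpotent linear map. -/
def Nlin (p : Fin m → Fin (m + 1)) : (Fin m → R3) →ₗ[ℝ] (Fin m → R3) :=
  (LinearMap.funLeft ℝ R3 p).comp (ext0 m)

lemma Nlin_apply (p : Fin m → Fin (m + 1)) (xs : Fin m → R3) (i : Fin m) :
    Nlin p xs i = (Fin.cons 0 xs : Fin (m + 1) → R3) (p i) := rfl

lemma isNilpotent_Nlin {p : Fin m → Fin (m + 1)} (hp : Acyc m p) :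
    IsNilpotent (Nlin p) := by
  obtain ⟨r, hr⟩ := hp
  have key : ∀ (k : ℕ) (xs : Fin m → R3) (i : Fin m), r i.succ ≤ k →
      ((Nlin p) ^ k) xs i = 0 := by
    intro k
    induction k with
    | zero => intro xs i hi; exact absurd (hr i) (by omega)
    | succ k ih =>
      intro xs i hi
      rw [pow_succ']
      have : ((Nlin p) * ((Nlin p) ^ k)) xs i
          = (Fin.cons 0 (((Nlin p) ^ k) xs) : Fin (m + 1) → R3) (p i) := rfl
      rw [this]
      rcases Fin.eq_zero_or_eq_succ (p i) with h0 | ⟨j, hj⟩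
      · rw [h0]; simp
      · rw [hj]
        simp only [Fin.cons_succ]
        refine ih xs j ?_
        have := hr i
        rw [hj] at this
        omega
  refine ⟨(Finset.univ.sup fun i : Fin m => r i.succ) + 1, ?_⟩
  apply LinearMap.ext
  intro xs
  funext i
  simp only [LinearMap.zero_apply, Pi.zero_apply]
  refine key _ xs i ?_
  have : r i.succ ≤ Finset.univ.sup fun i : Fin m => r i.succ :=
    Finset.le_sup (f := fun i : Fin m => r i.succ) (Finset.mem_univ i)
  omega

lemma volume_closedBall_R3 (y : R3) {ε : ℝ} (hε : 0 < ε) :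
    volume (closedBall y ε) = ENNReal.ofReal ((4 * Real.pi / 3) * ε ^ 3) := by
  rw [EuclideanSpace.volume_closedBall]
  have hcard : (Fintype.card (Fin 3) : ℝ) = 3 := by simp
  have hΓ : Real.Gamma ((Fintype.card (Fin 3) : ℝ) / 2 + 1) = 3 / 4 * Real.sqrt Real.pi := by
    rw [hcard]
    have h32 : (3 : ℝ) / 2 = 1 / 2 + 1 := by norm_num
    rw [Real.Gamma_add_one (by norm_num), h32, Real.Gamma_add_one (by norm_num),
      Real.Gamma_one_half_eq]
    ring
  rw [hΓ]
  have hπ : 0 < Real.pi := Real.pi_pos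
  have hs : Real.sqrt Real.pi > 0 := Real.sqrt_pos.2 hπ
  have hval : Real.sqrt Real.pi ^ Fintype.card (Fin 3) / (3 / 4 * Real.sqrt Real.pi)
      = 4 * Real.pi / 3 := by
    rw [Fintype.card_fin]
    rw [show Real.sqrt Real.pi ^ 3 = Real.pi * Real.sqrt Real.pi by
      rw [pow_succ, Real.sq_sqrt hπ.le]]
    field_simp
  rw [hval]
  rw [← ENNReal.ofReal_pow hε.le, ← ENNReal.ofReal_mul (by positivity)]
  rw [Fintype.card_fin]
  ring_nf

end ClusterVol

namespace ClusterVol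

instance (m : ℕ) : (volume : Measure (Fin m → R3)).IsAddHaarMeasure := ⟨⟩

lemma vol_cover {m : ℕ} (p : Fin m → Fin (m + 1)) (hp : Acyc m p) {ε : ℝ} (hε : 0 < ε)
    (x₀ : R3) :
    volume {xs : Fin m → R3 |
        ∀ i, dist (xs i) ((Fin.cons x₀ xs : Fin (m + 1) → R3) (p i)) ≤ ε}
      ≤ (ENNReal.ofReal ((4 * Real.pi / 3) * ε ^ 3)) ^ m := by
  set L := (1 : (Fin m → R3) →ₗ[ℝ] (Fin m → R3)) - Nlin p with hLdef
  set c : Fin m → R3 := fun i => (Fin.cons x₀ (0 : Fin m → R3) : Fin (m + 1) → R3) (p i)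
    with hcdef
  have hdet : LinearMap.det L = 1 :=
    linearMap_det_one_sub_of_isNilpotent (isNilpotent_Nlin hp)
  have hset : {xs : Fin m → R3 |
        ∀ i, dist (xs i) ((Fin.cons x₀ xs : Fin (m + 1) → R3) (p i)) ≤ ε}
      = L ⁻¹' (Set.pi Set.univ fun i => closedBall (c i) ε) := by
    ext xs
    simp only [mem_setOf_eq, Set.mem_preimage, Set.mem_pi, Set.mem_univ, true_implies,
      mem_closedBall]
    refine forall_congr' fun i => ?_
    have hsplit : ∀ v : Fin (m + 1), (Fin.cons x₀ xs : Fin (m + 1) → R3) v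
        = (Fin.cons 0 xs : Fin (m + 1) → R3) v
          + (Fin.cons x₀ (0 : Fin m → R3) : Fin (m + 1) → R3) v := fun v => by
      refine Fin.cases ?_ (fun j => ?_) v <;> simp
    have hL : L xs i = xs i - (Fin.cons 0 xs : Fin (m + 1) → R3) (p i) := rfl
    rw [dist_eq_norm, dist_eq_norm, hL, hsplit (p i), hcdef, sub_add_eq_sub_sub]
  rw [hset, Measure.addHaar_preimage_linearMap volume (by rw [hdet]; exact one_ne_zero)]
  rw [hdet]
  simp only [inv_one, abs_one, ENNReal.ofReal_one, one_mul]
  rw [volume_pi_pi]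
  rw [Finset.prod_congr rfl (fun i _ => volume_closedBall_R3 (c i) hε), Finset.prod_const,
    Finset.card_univ, Fintype.card_fin]

end ClusterVol


namespace ClusterVol

lemma exists_parent {m : ℕ} {ε : ℝ} {x₀ : R3} {xs : Fin m → R3}
    (h : (clusterGraph ε (Fin.cons x₀ xs)).Connected) :
    ∃ p : Fin m → Fin (m + 1), Acyc m p ∧
      ∀ i, dist (xs i) ((Fin.cons x₀ xs : Fin (m + 1) → R3) (p i)) ≤ ε := by
  set G := clusterGraph ε (Fin.cons x₀ xs) with hG
  have key : ∀ i : Fin m, ∃ u, G.Adj i.succ u ∧ G.dist u 0 < G.dist i.succ 0 := by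
    intro i
    have hreach : G.Reachable i.succ 0 := h.preconnected i.succ 0
    obtain ⟨w, hw⟩ := hreach.exists_walk_length_eq_dist
    cases w with
    | @cons _ u _ hadj q =>
      refine ⟨u, hadj, ?_⟩
      have h1 : G.dist u 0 ≤ q.length := SimpleGraph.dist_le q
      have h2 : q.length + 1 = G.dist i.succ 0 := by
        rw [← hw]
        simp [SimpleGraph.Walk.length_cons]
      omega
  choose p h1 h2 using key
  refine ⟨p, ⟨fun v => G.dist v 0, h2⟩, fun i => ?_⟩
  have hadj := h1 i
  rw [hG, clusterGraph, SimpleGraph.fromRel_adj] at hadj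
  obtain ⟨-, hd | hd⟩ := hadj
  · simpa using hd
  · rw [dist_comm] at hd
    simpa using hd

end ClusterVol

/-- **Volume of an `ε`-cluster** (volume estimate behind Lemma 5.1). For every `ε > 0`,
`m ≥ 1` and `x₀ ∈ ℝ³`, the Lebesgue measure of the set of `(x₁,…,x_m) ∈ (ℝ³)^m` such
that the graph on `x₀, x₁, …, x_m` with edges between points at distance `≤ ε` is
connected is at most `(m+1)^{m-1} ((4π/3) ε³)^m`. -/
theorem volume_cluster_le
    (ε : ℝ) (hε : 0 < ε) (m : ℕ) (hm : 1 ≤ m) (x₀ : R3) :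
    volume {xs : Fin m → R3 | (clusterGraph ε (Fin.cons x₀ xs)).Connected}
      ≤ ENNReal.ofReal (((m + 1 : ℝ) ^ (m - 1)) * ((4 * Real.pi / 3) * ε ^ 3) ^ m) := by
  classical
  have hπ := Real.pi_pos
  set v0 : ℝ := (4 * Real.pi / 3) * ε ^ 3 with hv0
  have hv0pos : 0 < v0 := by positivity
  set ι := {p : Fin m → Fin (m + 1) // ClusterVol.Acyc m p} with hι
  haveI : Fintype ι := Fintype.ofFinite ι
  have hcover : {xs : Fin m → R3 | (clusterGraph ε (Fin.cons x₀ xs)).Connected}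
      ⊆ ⋃ P : ι, {xs : Fin m → R3 |
          ∀ i, dist (xs i) ((Fin.cons x₀ xs : Fin (m + 1) → R3) (P.1 i)) ≤ ε} := by
    intro xs hxs
    obtain ⟨p, hp, hd⟩ := ClusterVol.exists_parent hxs
    exact Set.mem_iUnion.2 ⟨⟨p, hp⟩, hd⟩
  have hcard : Fintype.card ι ≤ (m + 1) ^ (m - 1) := by
    rw [← Nat.card_eq_fintype_card]
    exact ClusterVol.card_acyc_le m hm
  calc volume {xs : Fin m → R3 | (clusterGraph ε (Fin.cons x₀ xs)).Connected}
      ≤ volume (⋃ P : ι, {xs : Fin m → R3 |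
          ∀ i, dist (xs i) ((Fin.cons x₀ xs : Fin (m + 1) → R3) (P.1 i)) ≤ ε}) :=
        measure_mono hcover
    _ ≤ ∑' P : ι, volume {xs : Fin m → R3 |
          ∀ i, dist (xs i) ((Fin.cons x₀ xs : Fin (m + 1) → R3) (P.1 i)) ≤ ε} :=
        measure_iUnion_le _
    _ = ∑ P : ι, volume {xs : Fin m → R3 |
          ∀ i, dist (xs i) ((Fin.cons x₀ xs : Fin (m + 1) → R3) (P.1 i)) ≤ ε} :=
        tsum_fintype _
    _ ≤ Finset.univ.card • (ENNReal.ofReal v0) ^ m := by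
        refine Finset.sum_le_card_nsmul _ _ _ fun P _ => ?_
        exact ClusterVol.vol_cover P.1 P.2 hε x₀
    _ = (Fintype.card ι : ℝ≥0∞) * (ENNReal.ofReal v0) ^ m := by
        rw [Finset.card_univ, nsmul_eq_mul]
    _ ≤ ((m + 1) ^ (m - 1) : ℕ) * (ENNReal.ofReal v0) ^ m := by
        exact mul_le_mul_left (Nat.cast_le.2 hcard) _
    _ = ENNReal.ofReal (((m + 1 : ℝ) ^ (m - 1)) * v0 ^ m) := by
        rw [← ENNReal.ofReal_pow hv0pos.le, ← ENNReal.ofReal_natCast,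
          ← ENNReal.ofReal_mul (by positivity)]
        congr 2
        push_cast
        ring
end
end

section
/- For every β > 0 and t > 0 there exists a constant C = C(β,t) > 0 such that for every η ∈ ℝ³ and every θ ∈ (0,1]: ∫_0^t ∫_{ℝ³} 𝟙{ |v − η| s ≤ 2 t θ } e^{−(β/2)|v|²} dv ds ≤ C θ. -/
open MeasureTheory Set Metric
open scoped ENNReal

noncomputable section

/-- Real-valued indicator of a proposition. -/
def ind (P : Prop) : ℝ :=
  letI := Classical.propDecidable P
  if P then 1 else 0

lemma ind_nonneg (P : Prop) : 0 ≤ ind P := by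
  unfold ind; split <;> norm_num

lemma ind_le_one (P : Prop) : ind P ≤ 1 := by
  unfold ind; split <;> norm_num

lemma ind_mono {P Q : Prop} (h : P → Q) : ind P ≤ ind Q := by
  unfold ind; split
  · rename_i hP; rw [if_pos (h hP)]
  · split <;> norm_num

lemma ind_mul_eq_indicator {α : Type*} (S : Set α) (g : α → ℝ) (v : α) :
    ind (v ∈ S) * g v = S.indicator g v := by
  unfold ind; split
  · rename_i h; rw [Set.indicator_of_mem h, one_mul]
  · rename_i h; rw [Set.indicator_of_notMem h, zero_mul]

/-- **Non-separation estimate** (used in the proof of Lemma 7.2): for every `β, t > 0`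
there is `C > 0` such that for every progenitor velocity `η ∈ ℝ³` and every
`θ ∈ (0,1]`,
`∫_0^t ∫_{ℝ³} 𝟙{|v − η| s ≤ 2 t θ} e^{−(β/2)|v|²} dv ds ≤ C θ`. -/
theorem non_separation_estimate
    (β t : ℝ) (hβ : 0 < β) (ht : 0 < t) :
    ∃ C > (0 : ℝ),
      ∀ η : R3, ∀ θ : ℝ, 0 < θ → θ ≤ 1 →
        (∫ s in (0 : ℝ)..t,
            ∫ v : R3, ind (‖v - η‖ * s ≤ 2 * t * θ) * Real.exp (-(β / 2) * ‖v‖ ^ 2))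
          ≤ C * θ := by
  classical
  -- Gaussian integrability and total mass
  have hGint : Integrable (fun v : R3 => Real.exp (-(β / 2) * ‖v‖ ^ 2)) := by
    have hc : Integrable (fun v : R3 =>
        Complex.exp (-(β/2 : ℂ) * ‖v‖^2 + 0 * (inner ℝ (0:R3) v : ℝ))) :=
      GaussianFourier.integrable_cexp_neg_mul_sq_norm_add (by simp; positivity) 0 0
    refine hc.norm.congr (Filter.Eventually.of_forall fun v => ?_)
    simp [Complex.norm_exp, ← Complex.ofReal_pow]
  set G : ℝ := ∫ v : R3, Real.exp (-(β / 2) * ‖v‖ ^ 2) with hGdef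
  have hG0 : 0 ≤ G := integral_nonneg fun v => (Real.exp_pos _).le
  set K : ℝ := (volume (ball (0:R3) 1)).toReal with hKdef
  have hK0 : 0 ≤ K := ENNReal.toReal_nonneg
  refine ⟨t * G + 4 * K * t + 1, by positivity, fun η θ hθ hθ1 => ?_⟩
  -- notation
  set S : ℝ → Set R3 := fun s => {v : R3 | ‖v - η‖ * s ≤ 2 * t * θ} with hSdef
  have hSmeas : ∀ s, MeasurableSet (S s) := fun s =>
    measurableSet_le (((measurable_id.sub measurable_const).norm).mul measurable_const)
      measurable_const
  set F : ℝ → ℝ := fun s =>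
    ∫ v : R3, ind (‖v - η‖ * s ≤ 2 * t * θ) * Real.exp (-(β / 2) * ‖v‖ ^ 2) with hFdef
  have hFind : ∀ (s : ℝ) (v : R3), ind (‖v - η‖ * s ≤ 2 * t * θ) *
      Real.exp (-(β / 2) * ‖v‖ ^ 2)
      = (S s).indicator (fun v => Real.exp (-(β / 2) * ‖v‖ ^ 2)) v := by
    intro s v
    by_cases h : ‖v - η‖ * s ≤ 2 * t * θ
    · rw [Set.indicator_of_mem (show v ∈ S s from h)]
      simp [ind, h]
    · rw [Set.indicator_of_notMem (show v ∉ S s from h)]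
      simp [ind, h]
  have hFeq : ∀ s, F s = ∫ v : R3, (S s).indicator
      (fun v => Real.exp (-(β / 2) * ‖v‖ ^ 2)) v := by
    intro s
    exact integral_congr_ae (Filter.Eventually.of_forall fun v => hFind s v)
  have hFint : ∀ s, Integrable (fun v : R3 =>
      ind (‖v - η‖ * s ≤ 2 * t * θ) * Real.exp (-(β / 2) * ‖v‖ ^ 2)) := by
    intro s
    exact (hGint.indicator (hSmeas s)).congr
      (Filter.Eventually.of_forall fun v => (hFind s v).symm)
  -- F ≤ G
  have hFleG : ∀ s, F s ≤ G := by
    intro s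
    refine integral_mono (hFint s) hGint fun v => ?_
    exact mul_le_of_le_one_left (Real.exp_pos _).le (ind_le_one _)
  -- F antitone on [0, t]
  have hanti : AntitoneOn F (Icc 0 t) := by
    intro a ha b hb hab
    refine integral_mono (hFint b) (hFint a) fun v => ?_
    refine mul_le_mul_of_nonneg_right (ind_mono fun h => ?_) (Real.exp_pos _).le
    exact le_trans (mul_le_mul_of_nonneg_left hab (norm_nonneg _)) h
  -- ball bound for positive s
  have hball : ∀ s : ℝ, 0 < s → F s ≤ K * (2 * t * θ / s) ^ 3 := by
    intro s hs
    have hr : 0 ≤ 2 * t * θ / s := by positivity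
    have hsub : S s ⊆ closedBall η (2 * t * θ / s) := by
      intro v hv
      rw [mem_closedBall, dist_eq_norm]
      rw [le_div_iff₀ hs]
      exact hv
    have hvol : volume (closedBall η (2 * t * θ / s))
        = ENNReal.ofReal ((2 * t * θ / s) ^ 3) * volume (ball (0:R3) 1) := by
      rw [Measure.addHaar_closedBall _ _ hr]; simp
    calc F s = ∫ v : R3, (S s).indicator
          (fun v => Real.exp (-(β / 2) * ‖v‖ ^ 2)) v := hFeq s
      _ ≤ ∫ v : R3, (closedBall η (2 * t * θ / s)).indicator
          (fun _ => (1:ℝ)) v := by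
          refine integral_mono (hGint.indicator (hSmeas s))
            ((integrableOn_const measure_closedBall_lt_top.ne).integrable_indicator
              measurableSet_closedBall) fun v => ?_
          have h1 : (S s).indicator (fun v => Real.exp (-(β / 2) * ‖v‖ ^ 2)) v
              ≤ (S s).indicator (fun _ => (1:ℝ)) v := by
            refine Set.indicator_le_indicator ?_
            refine Real.exp_le_one_iff.2 ?_
            have : 0 ≤ (β / 2) * ‖v‖ ^ 2 := by positivity
            linarith
          have h2 : (S s).indicator (fun _ => (1:ℝ)) v
              ≤ (closedBall η (2 * t * θ / s)).indicator (fun _ => (1:ℝ)) v :=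
            Set.indicator_le_indicator_of_subset hsub (fun _ => zero_le_one) v
          exact h1.trans h2
      _ = (volume (closedBall η (2 * t * θ / s))).toReal := by
          rw [← measureReal_def, ← integral_indicator_one measurableSet_closedBall]
          rfl
      _ = (2 * t * θ / s) ^ 3 * K := by
          rw [hvol, ENNReal.toReal_mul, ENNReal.toReal_ofReal (by positivity)]
      _ = K * (2 * t * θ / s) ^ 3 := by ring
  -- split the time integral at s₀ = θ t
  set s₀ : ℝ := θ * t with hs₀def
  have hs₀ : 0 < s₀ := by positivity
  have hs₀t : s₀ ≤ t := by nlinarith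
  have hmemIcc : ∀ {a : ℝ}, 0 ≤ a → a ≤ t → a ∈ Icc (0:ℝ) t := fun h1 h2 => ⟨h1, h2⟩
  have hFI : ∀ a b : ℝ, a ∈ Icc (0:ℝ) t → b ∈ Icc (0:ℝ) t →
      IntervalIntegrable F volume a b := by
    intro a b ha hb
    exact (hanti.mono (uIcc_subset_Icc ha hb)).intervalIntegrable
  have hI1 : IntervalIntegrable F volume 0 s₀ :=
    hFI 0 s₀ (hmemIcc le_rfl ht.le) (hmemIcc hs₀.le hs₀t)
  have hI2 : IntervalIntegrable F volume s₀ t :=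
    hFI s₀ t (hmemIcc hs₀.le hs₀t) (hmemIcc ht.le le_rfl)
  have hsplit : (∫ s in (0:ℝ)..t, F s)
      = (∫ s in (0:ℝ)..s₀, F s) + ∫ s in s₀..t, F s :=
    (intervalIntegral.integral_add_adjacent_intervals hI1 hI2).symm
  -- first piece
  have hpiece1 : (∫ s in (0:ℝ)..s₀, F s) ≤ s₀ * G := by
    have : (∫ s in (0:ℝ)..s₀, F s) ≤ ∫ _s in (0:ℝ)..s₀, G :=
      intervalIntegral.integral_mono_on hs₀.le hI1 intervalIntegrable_const
        fun s _ => hFleG s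
    simpa using this
  -- second piece
  have h0notin : (0:ℝ) ∉ uIcc s₀ t := by
    rw [uIcc_of_le hs₀t]
    intro h
    exact absurd h.1 (not_le.2 hs₀)
  have hzpowInt : IntervalIntegrable (fun s : ℝ => K * (2*t*θ)^3 * s ^ (-3:ℤ))
      volume s₀ t :=
    (intervalIntegral.intervalIntegrable_zpow (Or.inr h0notin)).const_mul _
  have hpiece2 : (∫ s in s₀..t, F s) ≤ 4 * K * t * θ := by
    have hpt : ∀ s ∈ Icc s₀ t, F s ≤ K * (2*t*θ)^3 * s ^ (-3:ℤ) := by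
      intro s hs
      have hspos : 0 < s := lt_of_lt_of_le hs₀ hs.1
      have hz : (s:ℝ) ^ (-3:ℤ) = (s ^ 3)⁻¹ := by
        rw [zpow_neg, show ((3:ℤ) = (3:ℕ)) from rfl, zpow_natCast]
      calc F s ≤ K * (2 * t * θ / s) ^ 3 := hball s hspos
        _ = K * (2*t*θ)^3 * s ^ (-3:ℤ) := by rw [hz, div_pow]; ring
    have hmono : (∫ s in s₀..t, F s) ≤ ∫ s in s₀..t, K * (2*t*θ)^3 * s ^ (-3:ℤ) :=
      intervalIntegral.integral_mono_on hs₀t hI2 hzpowInt hpt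
    have hval : (∫ s in s₀..t, K * (2*t*θ)^3 * s ^ (-3:ℤ))
        = K * (2*t*θ)^3 * ((t ^ (-2:ℤ) - s₀ ^ (-2:ℤ)) / (-2:ℝ)) := by
      have hz3 := integral_zpow (a := s₀) (b := t) (n := (-3:ℤ))
        (Or.inr ⟨by norm_num, h0notin⟩)
      rw [intervalIntegral.integral_const_mul, hz3]
      norm_num
    have ht2 : (0:ℝ) ≤ t ^ (-2:ℤ) := by positivity
    have hs₀2 : s₀ ^ (-2:ℤ) = (s₀^2)⁻¹ := by
      rw [zpow_neg, show ((2:ℤ) = (2:ℕ)) from rfl, zpow_natCast]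
    have hfin : K * (2*t*θ)^3 * (s₀ ^ (-2:ℤ) / 2) = 4 * K * t * θ := by
      rw [hs₀2, hs₀def]
      field_simp
      ring
    calc (∫ s in s₀..t, F s)
        ≤ K * (2*t*θ)^3 * ((t ^ (-2:ℤ) - s₀ ^ (-2:ℤ)) / (-2:ℝ)) := hval ▸ hmono
      _ = K * (2*t*θ)^3 * ((s₀ ^ (-2:ℤ) - t ^ (-2:ℤ)) / 2) := by ring
      _ ≤ K * (2*t*θ)^3 * (s₀ ^ (-2:ℤ) / 2) := by
          have hc : (0:ℝ) ≤ K * (2*t*θ)^3 := by positivity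
          have : (s₀ ^ (-2:ℤ) - t ^ (-2:ℤ)) / 2 ≤ s₀ ^ (-2:ℤ) / 2 := by linarith
          exact mul_le_mul_of_nonneg_left this hc
      _ = 4 * K * t * θ := hfin
  calc (∫ s in (0:ℝ)..t, F s)
      = (∫ s in (0:ℝ)..s₀, F s) + ∫ s in s₀..t, F s := hsplit
    _ ≤ s₀ * G + 4 * K * t * θ := add_le_add hpiece1 hpiece2
    _ = (t * G + 4 * K * t) * θ := by rw [hs₀def]; ring
    _ ≤ (t * G + 4 * K * t + 1) * θ := by nlinarith
end
end

section
/- For every β > 0 there exists a constant C_β > 0 such that for every η ∈ ℝ³ and every a ∈ (0,1]: ∫_{S²} ∫_{ℝ³} 𝟙{ |(v − η) × ν| ≤ a } e^{−(β/2)|v|²} dv dν ≤ C_β a², where dν is the surface measure on the unit sphere S² ⊂ ℝ³ and × denotes the cross product. -/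
open MeasureTheory Set Metric
open scoped ENNReal

set_option maxHeartbeats 1000000

noncomputable section

/-- The surface measure on the unit sphere `S² ⊂ ℝ³`. -/
def sphereMeasure : Measure (Metric.sphere (0 : R3) 1) := (volume : Measure R3).toSphere

/-- The cross product on `ℝ³` (with the Euclidean norm). -/
def cross3 (v u : R3) : R3 :=
  (EuclideanSpace.equiv (Fin 3) ℝ).symm
    ![v 1 * u 2 - v 2 * u 1, v 2 * u 0 - v 0 * u 2, v 0 * u 1 - v 1 * u 0]

lemma ind_of_true {P : Prop} (h : P) : ind P = 1 := by
  unfold ind; split <;> tauto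

lemma ind_of_false {P : Prop} (h : ¬ P) : ind P = 0 := by
  unfold ind; split <;> tauto

lemma norm_sq_eq3 (y : R3) : ‖y‖ ^ 2 = y 0 ^ 2 + y 1 ^ 2 + y 2 ^ 2 := by
  rw [EuclideanSpace.norm_eq, Real.sq_sqrt (by positivity)]
  simp [Fin.sum_univ_three, sq_abs]

lemma inner_eq3 (x y : R3) : (inner ℝ x y : ℝ) = x 0 * y 0 + x 1 * y 1 + x 2 * y 2 := by
  simp [PiLp.inner_apply, Fin.sum_univ_three, mul_comm]

lemma lagrange (w u : R3) :
    ‖cross3 w u‖ ^ 2 = ‖w‖ ^ 2 * ‖u‖ ^ 2 - (inner ℝ w u : ℝ) ^ 2 := by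
  rw [norm_sq_eq3, norm_sq_eq3, norm_sq_eq3, inner_eq3]
  show (w 1 * u 2 - w 2 * u 1) ^ 2 + (w 2 * u 0 - w 0 * u 2) ^ 2 +
    (w 0 * u 1 - w 1 * u 0) ^ 2 = _
  ring

/-- 1-D indicator integral. -/
lemma indicator_eq (c a : ℝ) :
    (fun x : ℝ => ind (|x - c| ≤ a)) = (Icc (c - a) (c + a)).indicator (fun _ => (1:ℝ)) := by
  funext x
  by_cases h : |x - c| ≤ a
  · rw [ind_of_true h, Set.indicator_of_mem]
    rw [abs_le] at h
    exact ⟨by linarith [h.1], by linarith [h.2]⟩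
  · rw [ind_of_false h, Set.indicator_of_notMem]
    intro hx
    exact h (abs_le.2 ⟨by linarith [hx.1], by linarith [hx.2]⟩)

lemma integrable_ind_abs (c a : ℝ) : Integrable (fun x : ℝ => ind (|x - c| ≤ a)) := by
  rw [indicator_eq]
  exact (integrableOn_const (s := Icc (c - a) (c + a)) (μ := volume) (C := (1:ℝ)) measure_Icc_lt_top.ne).integrable_indicator measurableSet_Icc

lemma integral_ind_abs (c a : ℝ) (ha : 0 < a) :
    (∫ x : ℝ, ind (|x - c| ≤ a)) = 2 * a := by
  rw [indicator_eq, integral_indicator_const _ measurableSet_Icc, Real.volume_real_Icc_of_le (by linarith),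
    smul_eq_mul, mul_one]
  ring

/-- Inner estimate: the Gaussian integral over the cylinder of radius `a`. -/
lemma inner_estimate (β : ℝ) (hβ : 0 < β) (ν η : R3) (hν : ‖ν‖ = 1)
    (a : ℝ) (ha : 0 < a) :
    (∫ v : R3, ind (‖cross3 (v - η) ν‖ ≤ a) * Real.exp (-(β / 2) * ‖v‖ ^ 2))
      ≤ (4 * Real.sqrt (Real.pi / (β / 2))) * a ^ 2 := by
  -- Build an orthonormal basis with `b 2 = ν`.
  have hcard : Module.finrank ℝ R3 = Fintype.card (Fin 3) := by simp
  have horth : Orthonormal ℝ (Set.restrict ({2} : Set (Fin 3)) (fun _ => ν)) := by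
    constructor
    · intro i; exact hν
    · intro i j hij
      exact absurd (Subtype.ext (i.2.trans j.2.symm)) hij
  obtain ⟨b, hb⟩ := horth.exists_orthonormalBasis_extension_of_card_eq hcard
  have hb2 : b 2 = ν := hb 2 rfl
  set e := b.repr with he
  -- the full measurable equivalence to the pi space
  set ψ : R3 ≃ᵐ (Fin 3 → ℝ) :=
    (e.toHomeomorph.toMeasurableEquiv).trans (MeasurableEquiv.toLp 2 (Fin 3 → ℝ)).symm with hψ
  have hmp : MeasurePreserving ψ volume volume :=
    (EuclideanSpace.volume_preserving_symm_measurableEquiv_toLp (Fin 3)).comp e.measurePreserving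
  set c : R3 := e η with hc
  set F : Fin 3 → ℝ → ℝ :=
    ![fun x => ind (|x - c 0| ≤ a), fun x => ind (|x - c 1| ≤ a),
      fun x => Real.exp (-(β / 2) * x ^ 2)] with hF
  have key : (∫ v : R3, ind (‖cross3 (v - η) ν‖ ≤ a) * Real.exp (-(β / 2) * ‖v‖ ^ 2))
      = ∫ x : Fin 3 → ℝ,
          ind (‖cross3 (ψ.symm x - η) ν‖ ≤ a) * Real.exp (-(β / 2) * ‖ψ.symm x‖ ^ 2) :=
    ((MeasurePreserving.symm ψ hmp).integral_comp ψ.symm.measurableEmbedding _).symm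
  rw [key]
  have hFint : ∀ i, Integrable (F i) := by
    intro i
    fin_cases i
    · exact integrable_ind_abs _ _
    · exact integrable_ind_abs _ _
    · exact integrable_exp_neg_mul_sq (by linarith)
  have hG : Integrable (fun x : Fin 3 → ℝ => ∏ i, F i (x i)) := Integrable.fintype_prod hFint
  have hpt : ∀ x : Fin 3 → ℝ,
      ind (‖cross3 (ψ.symm x - η) ν‖ ≤ a) * Real.exp (-(β / 2) * ‖ψ.symm x‖ ^ 2)
        ≤ ∏ i, F i (x i) := by
    intro x
    -- identify ψ.symm x with e.symm u where u has coordinates x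
    set u : R3 := (MeasurableEquiv.toLp 2 (Fin 3 → ℝ)) x with hu
    have hψx : ψ.symm x = e.symm u := rfl
    have hui : ∀ i, u i = x i := fun i => rfl
    have hnorm : ‖ψ.symm x‖ = ‖u‖ := by rw [hψx]; exact e.symm.norm_map u
    have hw : ψ.symm x - η = e.symm (u - c) := by
      rw [hψx, hc]; simp [map_sub]
    have hprod : ∏ i, F i (x i)
        = ind (|x 0 - c 0| ≤ a) * ind (|x 1 - c 1| ≤ a) * Real.exp (-(β / 2) * (x 2) ^ 2) := by
      rw [Fin.prod_univ_three]; rfl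
    rw [hprod]
    by_cases hcond : ‖cross3 (ψ.symm x - η) ν‖ ≤ a
    · -- the condition forces |x i - c i| ≤ a for i = 0, 1
      have hsq : ‖cross3 (ψ.symm x - η) ν‖ ^ 2 ≤ a ^ 2 := by
        apply sq_le_sq' _ hcond
        linarith [norm_nonneg (cross3 (ψ.symm x - η) ν)]
      have hν' : ν = e.symm (EuclideanSpace.single 2 (1:ℝ)) := by
        rw [← hb2]; exact (b.repr_symm_single 2).symm
      have hinner : (inner ℝ (ψ.symm x - η) ν : ℝ) = x 2 - c 2 := by
        rw [hw, hν', LinearIsometryEquiv.inner_map_map, inner_eq3]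
        simp [EuclideanSpace.single_apply, PiLp.sub_apply, ← hui 2]
      have hwnorm : ‖ψ.symm x - η‖ ^ 2
          = (x 0 - c 0) ^ 2 + (x 1 - c 1) ^ 2 + (x 2 - c 2) ^ 2 := by
        rw [hw, e.symm.norm_map, norm_sq_eq3]
        simp [PiLp.sub_apply, ← hui 0, ← hui 1, ← hui 2]
      have hcross : ‖cross3 (ψ.symm x - η) ν‖ ^ 2
          = (x 0 - c 0) ^ 2 + (x 1 - c 1) ^ 2 := by
        rw [lagrange, hν, hinner, hwnorm]; ring
      rw [hcross] at hsq
      have h0 : |x 0 - c 0| ≤ a := by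
        nlinarith [sq_abs (x 0 - c 0), abs_nonneg (x 0 - c 0),
          sq_nonneg (x 1 - c 1), ha.le]
      have h1 : |x 1 - c 1| ≤ a := by
        nlinarith [sq_abs (x 1 - c 1), abs_nonneg (x 1 - c 1),
          sq_nonneg (x 0 - c 0), ha.le]
      have hn2 : ‖ψ.symm x‖ ^ 2 = x 0 ^ 2 + x 1 ^ 2 + x 2 ^ 2 := by
        rw [hnorm, norm_sq_eq3, hui 0, hui 1, hui 2]
      have hexp : Real.exp (-(β / 2) * ‖ψ.symm x‖ ^ 2)
          ≤ Real.exp (-(β / 2) * (x 2) ^ 2) := by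
        apply Real.exp_le_exp.2
        rw [hn2]
        nlinarith [sq_nonneg (x 0), sq_nonneg (x 1), hβ]
      rw [ind_of_true hcond, ind_of_true h0, ind_of_true h1]
      simpa using hexp
    · rw [ind_of_false hcond, zero_mul]
      exact mul_nonneg (mul_nonneg (ind_nonneg _) (ind_nonneg _)) (Real.exp_pos _).le
  calc (∫ x : Fin 3 → ℝ,
          ind (‖cross3 (ψ.symm x - η) ν‖ ≤ a) * Real.exp (-(β / 2) * ‖ψ.symm x‖ ^ 2))
      ≤ ∫ x : Fin 3 → ℝ, ∏ i, F i (x i) := by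
        apply integral_mono_of_nonneg _ hG (Filter.Eventually.of_forall hpt)
        exact Filter.Eventually.of_forall fun x =>
          mul_nonneg (ind_nonneg _) (Real.exp_pos _).le
    _ = ∏ i, ∫ x, F i x := integral_fintype_prod_eq_prod F
    _ = (4 * Real.sqrt (Real.pi / (β / 2))) * a ^ 2 := by
        rw [Fin.prod_univ_three]
        show (∫ x : ℝ, ind (|x - c 0| ≤ a)) * (∫ x : ℝ, ind (|x - c 1| ≤ a))
            * (∫ x : ℝ, Real.exp (-(β / 2) * x ^ 2)) = _
        rw [integral_ind_abs _ _ ha, integral_ind_abs _ _ ha, integral_gaussian]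
        ring

/-- **Grazing-collision cutoff estimate** (error term `ℰ₆` in the proof of Theorem 2):
for every `β > 0` there is `C_β > 0` such that for every `η ∈ ℝ³` and `a ∈ (0,1]`,
`∫_{S²} ∫_{ℝ³} 𝟙{|(v − η) × ν| ≤ a} e^{−(β/2)|v|²} dv dν ≤ C_β a²`. -/
theorem grazing_collision_cutoff_estimate
    (β : ℝ) (hβ : 0 < β) :
    ∃ Cβ > (0 : ℝ),
      ∀ η : R3, ∀ a : ℝ, 0 < a → a ≤ 1 →
        (∫ ν : Metric.sphere (0 : R3) 1,
            (∫ v : R3,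
              ind (‖cross3 (v - η) (ν : R3)‖ ≤ a) * Real.exp (-(β / 2) * ‖v‖ ^ 2))
          ∂sphereMeasure)
          ≤ Cβ * a ^ 2 := by
  set K := 4 * Real.sqrt (Real.pi / (β / 2)) with hK
  have hKpos : 0 < K := by
    have h1 : 0 < Real.pi / (β / 2) := by positivity
    have := Real.sqrt_pos.2 h1
    rw [hK]; linarith
  set M := (sphereMeasure (univ : Set (Metric.sphere (0:R3) 1))).toReal with hM
  have hM0 : 0 ≤ M := ENNReal.toReal_nonneg
  refine ⟨K * (M + 1), by nlinarith, ?_⟩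
  intro η a ha ha1
  haveI : IsFiniteMeasure sphereMeasure := by unfold sphereMeasure; infer_instance
  have hinner : ∀ ν : Metric.sphere (0:R3) 1,
      ‖∫ v : R3, ind (‖cross3 (v - η) (ν:R3)‖ ≤ a) * Real.exp (-(β/2) * ‖v‖^2)‖
        ≤ K * a ^ 2 := by
    intro ν
    have hν : ‖(ν:R3)‖ = 1 := by
      have := ν.2
      rwa [mem_sphere_iff_norm, sub_zero] at this
    rw [Real.norm_eq_abs, abs_of_nonneg (integral_nonneg fun v =>
      mul_nonneg (ind_nonneg _) (Real.exp_pos _).le)]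
    exact inner_estimate β hβ _ η hν a ha
  have h2 := norm_integral_le_of_norm_le_const (μ := sphereMeasure) (C := K * a ^ 2)
    (Filter.Eventually.of_forall hinner)
  calc (∫ ν : Metric.sphere (0 : R3) 1,
            (∫ v : R3,
              ind (‖cross3 (v - η) (ν : R3)‖ ≤ a) * Real.exp (-(β / 2) * ‖v‖ ^ 2))
          ∂sphereMeasure)
      ≤ ‖∫ ν : Metric.sphere (0 : R3) 1,
            (∫ v : R3,
              ind (‖cross3 (v - η) (ν : R3)‖ ≤ a) * Real.exp (-(β / 2) * ‖v‖ ^ 2))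
          ∂sphereMeasure‖ := le_abs_self _
    _ ≤ K * a ^ 2 * M := h2
    _ ≤ K * (M + 1) * a ^ 2 := by nlinarith [sq_nonneg a]
end
end
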